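/- arXiv:2504.04938 — 2 statements merged into one kernel-verified Lean document; each statement's English description precedes it below -/
import Mathlib

section
/- (Deterministic LQ optimality, noiseless analogue of Lemma 2.1 / Remark 2.1) Assume Q_I, Q, Q̄_I, Q̄ are symmetric positive semidefinite and R is symmetric positive definite. Let z, ū : [0,T] → ℝ^n, ℝ^m be continuous, let P1 solve the Riccati equation on [0,T], and let g : [0,T] → ℝ^n solve g'(t) = −[(Aᵀ − P1(t)BR⁻¹Bᵀ)g(t) + (P1(t)C − QΓ)z(t) + P1(t)Fū(t) − Q_I s − Qη] with g(T) = −Q̄_I s̄ − Q̄(Γ̄z(T) + η̄). For a continuous control u : [0,T] → ℝ^m let x_u solve x' = Ax + Bu + Cz(t) + Fū(t), x(0) = x₀, and define J(u) := ½∫_0^T[(x_u − s)ᵀQ_I(x_u − s) + uᵀRu + (x_u − Γz − η)ᵀQ(x_u − Γz − η)] dt + ½(x_u(T) − s̄)ᵀQ̄_I(x_u(T) − s̄) + ½(x_u(T) − Γ̄z(T) − η̄)ᵀQ̄(x_u(T) − Γ̄z(T) − η̄). Let x* be the solution of the closed-loop equation x' = Ax − BR⁻¹Bᵀ(P1(t)x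 + g(t)) + Cz(t) + Fū(t), x(0) = x₀, and set u*(t) := −R⁻¹Bᵀ(P1(t)x*(t) + g(t)). Then J(u*) ≤ J(u) for every continuous control u. -/
open scoped Matrix

attribute [local instance] Matrix.normedAddCommGroup Matrix.normedSpace

/-- The LQ cost functional of an agent: running cost plus terminal cost, for control `u`
and corresponding state trajectory `x`, given mean-field trajectories `z` (the control
average only enters the dynamics, not the cost). -/
noncomputable def lqCost {n m : ℕ} (T : ℝ)
    (QI Q QbI Qb Γ Γb : Matrix (Fin n) (Fin n) ℝ)
    (R : Matrix (Fin m) (Fin m) ℝ)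
    (s η sb ηb : Fin n → ℝ)
    (z : ℝ → Fin n → ℝ)
    (u : ℝ → Fin m → ℝ) (x : ℝ → Fin n → ℝ) : ℝ :=
  (1/2) * (∫ t in (0:ℝ)..T,
      ((x t - s) ⬝ᵥ (QI *ᵥ (x t - s)) + (u t) ⬝ᵥ (R *ᵥ u t)
        + (x t - (Γ *ᵥ z t + η)) ⬝ᵥ (Q *ᵥ (x t - (Γ *ᵥ z t + η)))))
    + (1/2) * ((x T - sb) ⬝ᵥ (QbI *ᵥ (x T - sb)))
    + (1/2) * ((x T - (Γb *ᵥ z T + ηb)) ⬝ᵥ (Qb *ᵥ (x T - (Γb *ᵥ z T + ηb))))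

/- ### Auxiliary calculus lemmas -/

theorem hasDerivWithinAt_pi'' {ι : Type*} [Fintype ι] {E : Type*} [NormedAddCommGroup E]
    [NormedSpace ℝ E] {f : ℝ → ι → E} {f' : ι → E}
    {s : Set ℝ} {t : ℝ} :
    HasDerivWithinAt f f' s t ↔ ∀ i, HasDerivWithinAt (fun x => f x i) (f' i) s t := by
  exact hasDerivWithinAt_pi

theorem matrix_entry_deriv {n' m' : ℕ} {M : ℝ → Matrix (Fin n') (Fin m') ℝ}
    {M' : Matrix (Fin n') (Fin m') ℝ} {s : Set ℝ} {t : ℝ}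
    (h : HasDerivWithinAt M M' s t) (i : Fin n') (j : Fin m') :
    HasDerivWithinAt (fun x => M x i j) (M' i j) s t := by
  have h1 : HasDerivWithinAt (fun x => (M x : Fin n' → Fin m' → ℝ))
      (M' : Fin n' → Fin m' → ℝ) s t := h
  exact hasDerivWithinAt_pi''.1 (hasDerivWithinAt_pi''.1 h1 i) j

theorem mulVec_deriv {n' m' : ℕ} {M : ℝ → Matrix (Fin n') (Fin m') ℝ}
    {M' : Matrix (Fin n') (Fin m') ℝ} {v : ℝ → Fin m' → ℝ} {v' : Fin m' → ℝ}
    {s : Set ℝ} {t : ℝ} (hM : HasDerivWithinAt M M' s t) (hv : HasDerivWithinAt v v' s t) :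
    HasDerivWithinAt (fun x => M x *ᵥ v x) (M' *ᵥ v t + M t *ᵥ v') s t := by
  rw [hasDerivWithinAt_pi'']
  intro i
  simp only [Matrix.mulVec, dotProduct, Pi.add_apply]
  rw [← Finset.sum_add_distrib]
  exact HasDerivWithinAt.fun_sum fun j _ =>
    ((matrix_entry_deriv hM i j).mul (hasDerivWithinAt_pi''.1 hv j))

theorem dotProduct_deriv {n' : ℕ} {a : ℝ → Fin n' → ℝ} {a' : Fin n' → ℝ}
    {b : ℝ → Fin n' → ℝ} {b' : Fin n' → ℝ} {s : Set ℝ} {t : ℝ}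
    (ha : HasDerivWithinAt a a' s t) (hb : HasDerivWithinAt b b' s t) :
    HasDerivWithinAt (fun x => a x ⬝ᵥ b x) (a' ⬝ᵥ b t + a t ⬝ᵥ b') s t := by
  simp only [dotProduct]
  rw [← Finset.sum_add_distrib]
  exact HasDerivWithinAt.fun_sum fun j _ =>
    ((hasDerivWithinAt_pi''.1 ha j).mul (hasDerivWithinAt_pi''.1 hb j))

theorem continuousOn_mulVec' {n' m' : ℕ} {M : ℝ → Matrix (Fin n') (Fin m') ℝ}
    {v : ℝ → Fin m' → ℝ} {s : Set ℝ}
    (hM : ContinuousOn M s) (hv : ContinuousOn v s) :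
    ContinuousOn (fun t => M t *ᵥ v t) s := by
  have hM1 : ContinuousOn (fun t => (M t : Fin n' → Fin m' → ℝ)) s := hM
  rw [continuousOn_pi]
  intro i
  simp only [Matrix.mulVec, dotProduct]
  apply continuousOn_finset_sum
  intro j _
  exact (continuousOn_pi.1 (continuousOn_pi.1 hM1 i) j).mul (continuousOn_pi.1 hv j)

theorem continuousOn_dotProduct' {n' : ℕ} {a b : ℝ → Fin n' → ℝ} {s : Set ℝ}
    (ha : ContinuousOn a s) (hb : ContinuousOn b s) :
    ContinuousOn (fun t => a t ⬝ᵥ b t) s := by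
  simp only [dotProduct]
  apply continuousOn_finset_sum
  intro j _
  exact (continuousOn_pi.1 ha j).mul (continuousOn_pi.1 hb j)

/- ### Quadratic form expansion for symmetric matrices -/

theorem dot_symm {k : ℕ} {M : Matrix (Fin k) (Fin k) ℝ} (hM : Mᵀ = M) (a b : Fin k → ℝ) :
    a ⬝ᵥ (M *ᵥ b) = (M *ᵥ a) ⬝ᵥ b := by
  rw [Matrix.dotProduct_mulVec, ← Matrix.mulVec_transpose, hM]

theorem quad_diff {k : ℕ} {M : Matrix (Fin k) (Fin k) ℝ} (hM : Mᵀ = M) (x y c : Fin k → ℝ) :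
    (y - c) ⬝ᵥ (M *ᵥ (y - c))
      = (x - c) ⬝ᵥ (M *ᵥ (x - c)) + (y - x) ⬝ᵥ (M *ᵥ (y - x))
        + 2 * ((M *ᵥ (x - c)) ⬝ᵥ (y - x)) := by
  have hyc : y - c = (x - c) + (y - x) := by abel
  rw [hyc]
  simp only [Matrix.mulVec_add, dotProduct_add, add_dotProduct]
  rw [dot_symm hM (x - c) (y - x), dotProduct_comm (y - x) (M *ᵥ (x - c))]
  ring

theorem quad_diff0 {k : ℕ} {M : Matrix (Fin k) (Fin k) ℝ} (hM : Mᵀ = M) (x y : Fin k → ℝ) :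
    y ⬝ᵥ (M *ᵥ y)
      = x ⬝ᵥ (M *ᵥ x) + (y - x) ⬝ᵥ (M *ᵥ (y - x)) + 2 * ((M *ᵥ x) ⬝ᵥ (y - x)) := by
  simpa using quad_diff hM x y 0

/-- deterministic LQ optimality, noiseless analogue of Lemma 2.1 /
Remark 2.1: the feedback control `u*(t) = −R⁻¹Bᵀ(P1(t)x*(t) + g(t))` along the
closed-loop trajectory `x*` minimizes the LQ cost over all continuous controls. -/
theorem feedback_control_optimal
    {n m : ℕ} {T : ℝ} (hT : 0 < T)
    (A C QI Q QbI Qb Γ Γb : Matrix (Fin n) (Fin n) ℝ)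
    (B F : Matrix (Fin n) (Fin m) ℝ)
    (s η sb ηb : Fin n → ℝ) (x₀ : Fin n → ℝ)
    (R : Matrix (Fin m) (Fin m) ℝ) (hR : R.PosDef)
    (hQI : QI.PosSemidef) (hQ : Q.PosSemidef) (hQbI : QbI.PosSemidef) (hQb : Qb.PosSemidef)
    -- z, ū : continuous mean-field trajectories
    (z : ℝ → Fin n → ℝ) (ubar : ℝ → Fin m → ℝ)
    (hz : Continuous z) (hubar : Continuous ubar)
    -- P1 : C¹ solution of the non-symmetric Riccati equation with P1(T) = Q̄_I + Q̄
    (P1 : ℝ → Matrix (Fin n) (Fin n) ℝ)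
    (hP1 : ∀ t ∈ Set.Icc (0:ℝ) T, HasDerivWithinAt P1
      (-(P1 t * A + Aᵀ * P1 t + (QI + Q) - P1 t * B * R⁻¹ * Bᵀ * P1 t)) (Set.Icc 0 T) t)
    (hP1T : P1 T = QbI + Qb)
    -- g : solution of the backward linear ODE
    (g : ℝ → Fin n → ℝ)
    (hg : ∀ t ∈ Set.Icc (0:ℝ) T, HasDerivWithinAt g
      (-((Aᵀ - P1 t * B * R⁻¹ * Bᵀ) *ᵥ g t + (P1 t * C - Q * Γ) *ᵥ z t
        + (P1 t * F) *ᵥ ubar t - QI *ᵥ s - Q *ᵥ η)) (Set.Icc 0 T) t)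
    (hgT : g T = -(QbI *ᵥ sb) - Qb *ᵥ (Γb *ᵥ z T + ηb))
    -- x* : closed-loop trajectory, u* : feedback control
    (xstar : ℝ → Fin n → ℝ)
    (hxstar : ∀ t ∈ Set.Icc (0:ℝ) T, HasDerivWithinAt xstar
      (A *ᵥ xstar t - (B * R⁻¹ * Bᵀ) *ᵥ (P1 t *ᵥ xstar t + g t)
        + C *ᵥ z t + F *ᵥ ubar t) (Set.Icc 0 T) t)
    (hxstar0 : xstar 0 = x₀)
    (ustar : ℝ → Fin m → ℝ)
    (hustar : ∀ t, ustar t = -((R⁻¹ * Bᵀ) *ᵥ (P1 t *ᵥ xstar t + g t))) :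
    ∀ (u : ℝ → Fin m → ℝ) (xu : ℝ → Fin n → ℝ), Continuous u →
      (∀ t ∈ Set.Icc (0:ℝ) T, HasDerivWithinAt xu
        (A *ᵥ xu t + B *ᵥ u t + C *ᵥ z t + F *ᵥ ubar t) (Set.Icc 0 T) t) →
      xu 0 = x₀ →
      lqCost T QI Q QbI Qb Γ Γb R s η sb ηb z ustar xstar
        ≤ lqCost T QI Q QbI Qb Γ Γb R s η sb ηb z u xu := by
  intro u xu hu hxu hxu0
  have hIcc : Set.uIcc (0:ℝ) T = Set.Icc 0 T := Set.uIcc_of_le hT.le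
  -- symmetry of the weight matrices
  have hQIs : QIᵀ = QI := by
    rw [← Matrix.conjTranspose_eq_transpose_of_trivial]; exact hQI.1
  have hQs : Qᵀ = Q := by
    rw [← Matrix.conjTranspose_eq_transpose_of_trivial]; exact hQ.1
  have hQbIs : QbIᵀ = QbI := by
    rw [← Matrix.conjTranspose_eq_transpose_of_trivial]; exact hQbI.1
  have hQbs : Qbᵀ = Qb := by
    rw [← Matrix.conjTranspose_eq_transpose_of_trivial]; exact hQb.1
  have hRs : Rᵀ = R := by
    rw [← Matrix.conjTranspose_eq_transpose_of_trivial]; exact hR.1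
  have hRR : R * R⁻¹ = 1 := Matrix.mul_nonsing_inv R (isUnit_iff_ne_zero.mpr hR.det_pos.ne')
  -- continuity of everything on [0, T]
  have cP1 : ContinuousOn P1 (Set.Icc 0 T) := fun t ht => (hP1 t ht).continuousWithinAt
  have cg : ContinuousOn g (Set.Icc 0 T) := fun t ht => (hg t ht).continuousWithinAt
  have cxs : ContinuousOn xstar (Set.Icc 0 T) := fun t ht => (hxstar t ht).continuousWithinAt
  have cxu : ContinuousOn xu (Set.Icc 0 T) := fun t ht => (hxu t ht).continuousWithinAt
  have cp : ContinuousOn (fun t => P1 t *ᵥ xstar t + g t) (Set.Icc 0 T) :=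
    (continuousOn_mulVec' cP1 cxs).add cg
  have cus : ContinuousOn ustar (Set.Icc 0 T) :=
    ((continuousOn_mulVec' continuousOn_const cp).neg).congr fun t _ => hustar t
  have cδ : ContinuousOn (fun t => xu t - xstar t) (Set.Icc 0 T) := cxu.sub cxs
  have cv : ContinuousOn (fun t => u t - ustar t) (Set.Icc 0 T) := hu.continuousOn.sub cus
  -- derivative of the adjoint p(t) = P1(t) x*(t) + g(t)
  have hpder : ∀ t ∈ Set.Icc (0:ℝ) T, HasDerivWithinAt (fun τ => P1 τ *ᵥ xstar τ + g τ)
      (-(Aᵀ *ᵥ (P1 t *ᵥ xstar t + g t)) - QI *ᵥ (xstar t - s)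
        - Q *ᵥ (xstar t - (Γ *ᵥ z t + η))) (Set.Icc 0 T) t := by
    intro t ht
    refine ((mulVec_deriv (hP1 t ht) (hxstar t ht)).add (hg t ht)).congr_deriv ?_
    simp only [Matrix.add_mulVec, Matrix.sub_mulVec, Matrix.neg_mulVec, Matrix.mulVec_add,
      Matrix.mulVec_sub, Matrix.mulVec_neg, ← Matrix.mulVec_mulVec]
    abel
  -- derivative of δ(t) = xu(t) − x*(t)
  have hdder : ∀ t ∈ Set.Icc (0:ℝ) T, HasDerivWithinAt (fun τ => xu τ - xstar τ)
      (A *ᵥ (xu t - xstar t) + B *ᵥ (u t - ustar t)) (Set.Icc 0 T) t := by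
    intro t ht
    refine ((hxu t ht).sub (hxstar t ht)).congr_deriv ?_
    rw [hustar]
    simp only [Matrix.add_mulVec, Matrix.sub_mulVec, Matrix.neg_mulVec, Matrix.mulVec_add,
      Matrix.mulVec_sub, Matrix.mulVec_neg, ← Matrix.mulVec_mulVec]
    abel
  -- derivative of φ(t) = p(t) ⬝ᵥ δ(t)
  have hphider : ∀ t ∈ Set.Icc (0:ℝ) T, HasDerivWithinAt
      (fun τ => (P1 τ *ᵥ xstar τ + g τ) ⬝ᵥ (xu τ - xstar τ))
      (-((QI *ᵥ (xstar t - s)) ⬝ᵥ (xu t - xstar t)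
         + (Q *ᵥ (xstar t - (Γ *ᵥ z t + η))) ⬝ᵥ (xu t - xstar t)
         + (R *ᵥ ustar t) ⬝ᵥ (u t - ustar t))) (Set.Icc 0 T) t := by
    intro t ht
    refine (dotProduct_deriv (hpder t ht) (hdder t ht)).congr_deriv ?_
    have h1 : (P1 t *ᵥ xstar t + g t) ⬝ᵥ (A *ᵥ (xu t - xstar t))
        = (Aᵀ *ᵥ (P1 t *ᵥ xstar t + g t)) ⬝ᵥ (xu t - xstar t) := by
      rw [Matrix.dotProduct_mulVec, ← Matrix.mulVec_transpose]
    have h2 : (R *ᵥ ustar t) ⬝ᵥ (u t - ustar t)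
        = -((P1 t *ᵥ xstar t + g t) ⬝ᵥ (B *ᵥ (u t - ustar t))) := by
      rw [hustar, Matrix.mulVec_neg, Matrix.mulVec_mulVec, ← Matrix.mul_assoc, hRR,
        Matrix.one_mul, neg_dotProduct, Matrix.mulVec_transpose,
        ← Matrix.dotProduct_mulVec]
    rw [h2]
    simp only [sub_dotProduct, neg_dotProduct, dotProduct_add]
    rw [h1]
    ring
  -- FTC for φ
  have hδ0 : xu 0 - xstar 0 = 0 := by rw [hxu0, hxstar0, sub_self]
  have cL : ContinuousOn (fun t => (QI *ᵥ (xstar t - s)) ⬝ᵥ (xu t - xstar t)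
      + (Q *ᵥ (xstar t - (Γ *ᵥ z t + η))) ⬝ᵥ (xu t - xstar t)
      + (R *ᵥ ustar t) ⬝ᵥ (u t - ustar t)) (Set.Icc 0 T) := by
    refine (ContinuousOn.add (ContinuousOn.add ?_ ?_) ?_)
    · exact continuousOn_dotProduct'
        (continuousOn_mulVec' continuousOn_const (cxs.sub continuousOn_const)) cδ
    · refine continuousOn_dotProduct'
        (continuousOn_mulVec' continuousOn_const (cxs.sub ?_)) cδ
      exact (continuousOn_mulVec' continuousOn_const hz.continuousOn).add continuousOn_const
    · exact continuousOn_dotProduct' (continuousOn_mulVec' continuousOn_const cus) cv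
  have hFTC : ∫ t in (0:ℝ)..T, (-((QI *ᵥ (xstar t - s)) ⬝ᵥ (xu t - xstar t)
      + (Q *ᵥ (xstar t - (Γ *ᵥ z t + η))) ⬝ᵥ (xu t - xstar t)
      + (R *ᵥ ustar t) ⬝ᵥ (u t - ustar t)))
      = (P1 T *ᵥ xstar T + g T) ⬝ᵥ (xu T - xstar T)
        - (P1 0 *ᵥ xstar 0 + g 0) ⬝ᵥ (xu 0 - xstar 0) := by
    refine intervalIntegral.integral_eq_sub_of_hasDeriv_right_of_le hT.le
      (fun t ht => ((hphider t ht).continuousWithinAt)) (fun t ht => ?_) ?_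
    · exact ((hphider t ⟨ht.1.le, ht.2.le⟩).hasDerivAt
        (Icc_mem_nhds ht.1 ht.2)).hasDerivWithinAt
    · exact (cL.neg.mono (by rw [hIcc])).intervalIntegrable
  have hintL : (∫ t in (0:ℝ)..T, ((QI *ᵥ (xstar t - s)) ⬝ᵥ (xu t - xstar t)
      + (Q *ᵥ (xstar t - (Γ *ᵥ z t + η))) ⬝ᵥ (xu t - xstar t)
      + (R *ᵥ ustar t) ⬝ᵥ (u t - ustar t)))
      = -((P1 T *ᵥ xstar T + g T) ⬝ᵥ (xu T - xstar T)) := by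
    have h0 : (P1 0 *ᵥ xstar 0 + g 0) ⬝ᵥ (xu 0 - xstar 0) = 0 := by
      rw [hδ0, dotProduct_zero]
    rw [intervalIntegral.integral_neg, h0, sub_zero] at hFTC
    linarith
  -- pointwise decomposition of the running cost
  have hrun : ∀ t, (xu t - s) ⬝ᵥ (QI *ᵥ (xu t - s)) + u t ⬝ᵥ (R *ᵥ u t)
      + (xu t - (Γ *ᵥ z t + η)) ⬝ᵥ (Q *ᵥ (xu t - (Γ *ᵥ z t + η)))
      = ((xstar t - s) ⬝ᵥ (QI *ᵥ (xstar t - s)) + ustar t ⬝ᵥ (R *ᵥ ustar t)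
          + (xstar t - (Γ *ᵥ z t + η)) ⬝ᵥ (Q *ᵥ (xstar t - (Γ *ᵥ z t + η))))
        + (((xu t - xstar t) ⬝ᵥ (QI *ᵥ (xu t - xstar t))
            + (u t - ustar t) ⬝ᵥ (R *ᵥ (u t - ustar t))
            + (xu t - xstar t) ⬝ᵥ (Q *ᵥ (xu t - xstar t)))
          + 2 * ((QI *ᵥ (xstar t - s)) ⬝ᵥ (xu t - xstar t)
            + (Q *ᵥ (xstar t - (Γ *ᵥ z t + η))) ⬝ᵥ (xu t - xstar t)
            + (R *ᵥ ustar t) ⬝ᵥ (u t - ustar t))) := by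
    intro t
    rw [quad_diff hQIs (xstar t) (xu t) s, quad_diff hQs (xstar t) (xu t) (Γ *ᵥ z t + η),
      quad_diff0 hRs (ustar t) (u t)]
    ring
  -- terminal decompositions
  have e3 : (xu T - sb) ⬝ᵥ (QbI *ᵥ (xu T - sb))
      = (xstar T - sb) ⬝ᵥ (QbI *ᵥ (xstar T - sb))
        + (xu T - xstar T) ⬝ᵥ (QbI *ᵥ (xu T - xstar T))
        + 2 * ((QbI *ᵥ (xstar T - sb)) ⬝ᵥ (xu T - xstar T)) :=
    quad_diff hQbIs (xstar T) (xu T) sb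
  have e4 : (xu T - (Γb *ᵥ z T + ηb)) ⬝ᵥ (Qb *ᵥ (xu T - (Γb *ᵥ z T + ηb)))
      = (xstar T - (Γb *ᵥ z T + ηb)) ⬝ᵥ (Qb *ᵥ (xstar T - (Γb *ᵥ z T + ηb)))
        + (xu T - xstar T) ⬝ᵥ (Qb *ᵥ (xu T - xstar T))
        + 2 * ((Qb *ᵥ (xstar T - (Γb *ᵥ z T + ηb))) ⬝ᵥ (xu T - xstar T)) :=
    quad_diff hQbs (xstar T) (xu T) (Γb *ᵥ z T + ηb)
  have e5 : (QbI *ᵥ (xstar T - sb)) ⬝ᵥ (xu T - xstar T)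
      + (Qb *ᵥ (xstar T - (Γb *ᵥ z T + ηb))) ⬝ᵥ (xu T - xstar T)
      = (P1 T *ᵥ xstar T + g T) ⬝ᵥ (xu T - xstar T) := by
    rw [← add_dotProduct]
    congr 1
    rw [hP1T, hgT]
    simp only [Matrix.add_mulVec, Matrix.mulVec_sub]
    abel
  -- integrability
  have irunstar : IntervalIntegrable (fun t => (xstar t - s) ⬝ᵥ (QI *ᵥ (xstar t - s))
      + ustar t ⬝ᵥ (R *ᵥ ustar t)
      + (xstar t - (Γ *ᵥ z t + η)) ⬝ᵥ (Q *ᵥ (xstar t - (Γ *ᵥ z t + η))))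
      MeasureTheory.volume 0 T := by
    apply ContinuousOn.intervalIntegrable
    rw [hIcc]
    refine (ContinuousOn.add (ContinuousOn.add ?_ ?_) ?_)
    · exact continuousOn_dotProduct' (cxs.sub continuousOn_const)
        (continuousOn_mulVec' continuousOn_const (cxs.sub continuousOn_const))
    · exact continuousOn_dotProduct' cus (continuousOn_mulVec' continuousOn_const cus)
    · have ca : ContinuousOn (fun t => xstar t - (Γ *ᵥ z t + η)) (Set.Icc 0 T) :=
        cxs.sub ((continuousOn_mulVec' continuousOn_const hz.continuousOn).add
          continuousOn_const)
      exact continuousOn_dotProduct' ca (continuousOn_mulVec' continuousOn_const ca)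
  have iquad : IntervalIntegrable (fun t => (xu t - xstar t) ⬝ᵥ (QI *ᵥ (xu t - xstar t))
      + (u t - ustar t) ⬝ᵥ (R *ᵥ (u t - ustar t))
      + (xu t - xstar t) ⬝ᵥ (Q *ᵥ (xu t - xstar t))) MeasureTheory.volume 0 T := by
    apply ContinuousOn.intervalIntegrable
    rw [hIcc]
    refine (ContinuousOn.add (ContinuousOn.add ?_ ?_) ?_)
    · exact continuousOn_dotProduct' cδ (continuousOn_mulVec' continuousOn_const cδ)
    · exact continuousOn_dotProduct' cv (continuousOn_mulVec' continuousOn_const cv)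
    · exact continuousOn_dotProduct' cδ (continuousOn_mulVec' continuousOn_const cδ)
  have iL : IntervalIntegrable (fun t => (QI *ᵥ (xstar t - s)) ⬝ᵥ (xu t - xstar t)
      + (Q *ᵥ (xstar t - (Γ *ᵥ z t + η))) ⬝ᵥ (xu t - xstar t)
      + (R *ᵥ ustar t) ⬝ᵥ (u t - ustar t)) MeasureTheory.volume 0 T := by
    apply ContinuousOn.intervalIntegrable
    rw [hIcc]
    exact cL
  -- splitting the running-cost integral
  have hsplit : (∫ t in (0:ℝ)..T, ((xu t - s) ⬝ᵥ (QI *ᵥ (xu t - s)) + u t ⬝ᵥ (R *ᵥ u t)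
      + (xu t - (Γ *ᵥ z t + η)) ⬝ᵥ (Q *ᵥ (xu t - (Γ *ᵥ z t + η)))))
      = (∫ t in (0:ℝ)..T, ((xstar t - s) ⬝ᵥ (QI *ᵥ (xstar t - s)) + ustar t ⬝ᵥ (R *ᵥ ustar t)
          + (xstar t - (Γ *ᵥ z t + η)) ⬝ᵥ (Q *ᵥ (xstar t - (Γ *ᵥ z t + η)))))
        + (∫ t in (0:ℝ)..T, ((xu t - xstar t) ⬝ᵥ (QI *ᵥ (xu t - xstar t))
            + (u t - ustar t) ⬝ᵥ (R *ᵥ (u t - ustar t))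
            + (xu t - xstar t) ⬝ᵥ (Q *ᵥ (xu t - xstar t))))
        + 2 * (∫ t in (0:ℝ)..T, ((QI *ᵥ (xstar t - s)) ⬝ᵥ (xu t - xstar t)
            + (Q *ᵥ (xstar t - (Γ *ᵥ z t + η))) ⬝ᵥ (xu t - xstar t)
            + (R *ᵥ ustar t) ⬝ᵥ (u t - ustar t))) := by
    rw [intervalIntegral.integral_congr (g := fun t =>
        ((xstar t - s) ⬝ᵥ (QI *ᵥ (xstar t - s)) + ustar t ⬝ᵥ (R *ᵥ ustar t)
          + (xstar t - (Γ *ᵥ z t + η)) ⬝ᵥ (Q *ᵥ (xstar t - (Γ *ᵥ z t + η))))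
        + (((xu t - xstar t) ⬝ᵥ (QI *ᵥ (xu t - xstar t))
            + (u t - ustar t) ⬝ᵥ (R *ᵥ (u t - ustar t))
            + (xu t - xstar t) ⬝ᵥ (Q *ᵥ (xu t - xstar t)))
          + 2 * ((QI *ᵥ (xstar t - s)) ⬝ᵥ (xu t - xstar t)
            + (Q *ᵥ (xstar t - (Γ *ᵥ z t + η))) ⬝ᵥ (xu t - xstar t)
            + (R *ᵥ ustar t) ⬝ᵥ (u t - ustar t)))) (fun t _ => hrun t)]
    rw [intervalIntegral.integral_add irunstar (iquad.add (iL.const_mul 2)),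
      intervalIntegral.integral_add iquad (iL.const_mul 2),
      intervalIntegral.integral_const_mul]
    ring
  -- nonnegativity of the quadratic remainder
  have n1 : 0 ≤ ∫ t in (0:ℝ)..T, ((xu t - xstar t) ⬝ᵥ (QI *ᵥ (xu t - xstar t))
      + (u t - ustar t) ⬝ᵥ (R *ᵥ (u t - ustar t))
      + (xu t - xstar t) ⬝ᵥ (Q *ᵥ (xu t - xstar t))) := by
    refine intervalIntegral.integral_nonneg hT.le fun τ _ => ?_
    have h1 := hQI.dotProduct_mulVec_nonneg (xu τ - xstar τ)
    have h2 := hR.posSemidef.dotProduct_mulVec_nonneg (u τ - ustar τ)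
    have h3 := hQ.dotProduct_mulVec_nonneg (xu τ - xstar τ)
    simp only [star_trivial] at h1 h2 h3
    linarith
  have n2 : 0 ≤ (xu T - xstar T) ⬝ᵥ (QbI *ᵥ (xu T - xstar T)) := by
    have := hQbI.dotProduct_mulVec_nonneg (xu T - xstar T); simpa using this
  have n3 : 0 ≤ (xu T - xstar T) ⬝ᵥ (Qb *ᵥ (xu T - xstar T)) := by
    have := hQb.dotProduct_mulVec_nonneg (xu T - xstar T); simpa using this
  -- conclusion
  simp only [lqCost]
  linarith [hsplit, hintL, e3, e4, e5, n1, n2, n3]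
end

section
/- Suppose z : [0,T] → ℝ^n solves z'(t) = (A + C − (B+F)R⁻¹BᵀP0(t))z(t) − (B+F)R⁻¹BᵀG(t), and g : [0,T] → ℝ^n solves g'(t) = −[(Aᵀ − P1(t)BR⁻¹Bᵀ)g(t) + (P1(t)C − QΓ)z(t) − P1(t)FR⁻¹Bᵀ(P0(t)z(t) + G(t)) − Q_I s − Qη] with g(T) = −Q̄_I s̄ − Q̄(Γ̄z(T) + η̄). Then P1(t)z(t) + g(t) = P0(t)z(t) + G(t) for every t ∈ [0,T]; i.e., the two feedback representations of the mean-field costate coincide along the equilibrium mean field state. -/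
open scoped Matrix

attribute [local instance] Matrix.normedAddCommGroup Matrix.normedSpace

noncomputable def mulVecL (n : ℕ) :
    Matrix (Fin n) (Fin n) ℝ →L[ℝ] (Fin n → ℝ) →L[ℝ] (Fin n → ℝ) :=
  LinearMap.toContinuousLinearMap
    { toFun := fun M => LinearMap.toContinuousLinearMap M.mulVecLin
      map_add' := by
        intro M N; ext x i; simp [Matrix.add_mulVec]
      map_smul' := by
        intro c M; ext x i; simp [Matrix.smul_mulVec] }

@[simp] lemma mulVecL_apply {n : ℕ} (M : Matrix (Fin n) (Fin n) ℝ) (x : Fin n → ℝ) :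
    mulVecL n M x = M *ᵥ x := rfl

lemma HasDerivWithinAt.mulVec' {n : ℕ} {P : ℝ → Matrix (Fin n) (Fin n) ℝ}
    {P' : Matrix (Fin n) (Fin n) ℝ} {z : ℝ → Fin n → ℝ} {z' : Fin n → ℝ}
    {s : Set ℝ} {t : ℝ} (hP : HasDerivWithinAt P P' s t)
    (hz : HasDerivWithinAt z z' s t) :
    HasDerivWithinAt (fun u => P u *ᵥ z u) (P' *ᵥ z t + P t *ᵥ z') s t := by
  have hc : HasDerivWithinAt (fun u => mulVecL n (P u)) (mulVecL n P') s t :=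
    (mulVecL n).hasFDerivAt.comp_hasDerivWithinAt t hP
  have := hc.clm_apply hz
  simpa using this


/-- along the equilibrium mean field state `z`, the two feedback
representations of the mean-field costate coincide: `P1(t)z(t) + g(t) = P0(t)z(t) + G(t)`
on `[0, T]`. -/
theorem costate_representations_coincide
    {n m : ℕ} {T : ℝ} (hT : 0 < T)
    (A C QI Q QbI Qb Γ Γb : Matrix (Fin n) (Fin n) ℝ)
    (B F : Matrix (Fin n) (Fin m) ℝ)
    (s η sb ηb : Fin n → ℝ)
    (R : Matrix (Fin m) (Fin m) ℝ) (hR : R.PosDef)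
    -- P0 : C¹ solution of the non-symmetric Riccati equation with P0(T) = Q̄_I + Q̄ − Q̄Γ̄
    (P0 : ℝ → Matrix (Fin n) (Fin n) ℝ)
    (hP0 : ∀ t ∈ Set.Icc (0:ℝ) T, HasDerivWithinAt P0
      (-(P0 t * (A + C) + Aᵀ * P0 t + (QI + Q - Q * Γ)
        - P0 t * (B + F) * R⁻¹ * Bᵀ * P0 t)) (Set.Icc 0 T) t)
    (hP0T : P0 T = QbI + Qb - Qb * Γb)
    -- P1 : C¹ solution of the non-symmetric Riccati equation with P1(T) = Q̄_I + Q̄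
    (P1 : ℝ → Matrix (Fin n) (Fin n) ℝ)
    (hP1 : ∀ t ∈ Set.Icc (0:ℝ) T, HasDerivWithinAt P1
      (-(P1 t * A + Aᵀ * P1 t + (QI + Q) - P1 t * B * R⁻¹ * Bᵀ * P1 t)) (Set.Icc 0 T) t)
    (hP1T : P1 T = QbI + Qb)
    -- G : C¹ solution of the backward linear ODE
    (G : ℝ → Fin n → ℝ)
    (hG : ∀ t ∈ Set.Icc (0:ℝ) T, HasDerivWithinAt G
      (-((Aᵀ - P0 t * (B + F) * R⁻¹ * Bᵀ) *ᵥ G t) + (QI *ᵥ s + Q *ᵥ η)) (Set.Icc 0 T) t)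
    (hGT : G T = -(QbI *ᵥ sb) - Qb *ᵥ ηb)
    -- z : solution of the equilibrium mean-field ODE
    (z : ℝ → Fin n → ℝ)
    (hz : ∀ t ∈ Set.Icc (0:ℝ) T, HasDerivWithinAt z
      ((A + C - (B + F) * R⁻¹ * Bᵀ * P0 t) *ᵥ z t - ((B + F) * R⁻¹ * Bᵀ) *ᵥ G t)
      (Set.Icc 0 T) t)
    -- g : solution of the backward linear ODE along z
    (g : ℝ → Fin n → ℝ)
    (hg : ∀ t ∈ Set.Icc (0:ℝ) T, HasDerivWithinAt g
      (-((Aᵀ - P1 t * B * R⁻¹ * Bᵀ) *ᵥ g t + (P1 t * C - Q * Γ) *ᵥ z t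
        - (P1 t * F * R⁻¹ * Bᵀ) *ᵥ (P0 t *ᵥ z t + G t) - QI *ᵥ s - Q *ᵥ η))
      (Set.Icc 0 T) t)
    (hgT : g T = -(QbI *ᵥ sb) - Qb *ᵥ (Γb *ᵥ z T + ηb)) :
    ∀ t ∈ Set.Icc (0:ℝ) T, P1 t *ᵥ z t + g t = P0 t *ᵥ z t + G t := by
  -- the difference of the two representations
  set w : ℝ → Fin n → ℝ := fun t => P1 t *ᵥ z t + g t - (P0 t *ᵥ z t + G t) with hw_def
  -- matrix of the linear ODE satisfied by w, clamped to [0,T]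
  set M : ℝ → Matrix (Fin n) (Fin n) ℝ :=
    fun t => -Aᵀ + P1 (max 0 (min t T)) * (B * R⁻¹ * Bᵀ) with hM_def
  have hclamp : ∀ t ∈ Set.Icc (0:ℝ) T, max 0 (min t T) = t := by
    intro t ht
    rw [min_eq_left ht.2, max_eq_right ht.1]
  have hclamp_mem : ∀ t : ℝ, max 0 (min t T) ∈ Set.Icc (0:ℝ) T :=
    fun t => ⟨le_max_left _ _, max_le (le_of_lt hT) (min_le_right _ _)⟩
  -- derivative of w
  have hw : ∀ t ∈ Set.Icc (0:ℝ) T,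
      HasDerivWithinAt w (M t *ᵥ w t) (Set.Icc 0 T) t := by
    intro t ht
    have h1 := ((hP1 t ht).mulVec' (hz t ht)).add (hg t ht)
    have h3 := ((hP0 t ht).mulVec' (hz t ht)).add (hG t ht)
    have h := h1.sub h3
    convert h using 1
    · rfl
    · rfl
    · rfl
    · rfl
    rw [hM_def, hw_def]
    simp only [hclamp t ht]
    simp only [Matrix.add_mulVec, Matrix.sub_mulVec, Matrix.neg_mulVec,
      ← Matrix.mulVec_mulVec, Matrix.mulVec_add, Matrix.mulVec_sub, Matrix.mulVec_neg,
      neg_add_rev, neg_sub, neg_neg]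
    abel
  -- terminal value
  have hwT : w T = 0 := by
    rw [hw_def]
    simp only [hP0T, hP1T, hGT, hgT]
    simp only [Matrix.add_mulVec, Matrix.sub_mulVec, Matrix.neg_mulVec,
      ← Matrix.mulVec_mulVec, Matrix.mulVec_add, Matrix.mulVec_sub, Matrix.mulVec_neg,
      neg_add_rev, neg_sub, neg_neg]
    abel
  -- uniform Lipschitz bound for x ↦ M t *ᵥ x
  have hP1cont : ContinuousOn P1 (Set.Icc 0 T) :=
    fun t ht => ((hP1 t ht).continuousWithinAt)
  have hMcont : Continuous M := by
    have hcl : Continuous fun t : ℝ => max 0 (min t T) :=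
      continuous_const.max (continuous_id.min continuous_const)
    have : Continuous fun t : ℝ => P1 (max 0 (min t T)) :=
      hP1cont.comp_continuous hcl hclamp_mem
    exact continuous_const.add (this.matrix_mul continuous_const)
  have hφ : Continuous fun t : ℝ => ‖mulVecL n (M t)‖ :=
    ((mulVecL n).continuous.comp hMcont).norm
  obtain ⟨t0, ht0mem, ht0max⟩ :=
    (isCompact_Icc (a := (0:ℝ)) (b := T)).exists_isMaxOn
      (Set.nonempty_Icc.mpr (le_of_lt hT)) (hφ.continuousOn)
  set K : NNReal := ‖mulVecL n (M t0)‖₊ with hK_def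
  have hMM : ∀ t : ℝ, M t = M (max 0 (min t T)) := by
    intro t
    rw [hM_def]
    simp only [hclamp _ (hclamp_mem t)]
  have hv : ∀ t : ℝ, LipschitzOnWith K (fun x => M t *ᵥ x) Set.univ := by
    intro t
    have hb : ‖mulVecL n (M t)‖₊ ≤ K := by
      rw [hK_def, ← NNReal.coe_le_coe, coe_nnnorm, coe_nnnorm]
      rw [hMM t]
      exact ht0max (hclamp_mem t)
    have := ((mulVecL n (M t)).lipschitz.weaken hb).lipschitzOnWith (s := Set.univ)
    exact this
  -- apply uniqueness of the ODE solution backwards from T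
  have hwcont : ContinuousOn w (Set.Icc 0 T) :=
    fun t ht => (hw t ht).continuousWithinAt
  have key : Set.EqOn w (fun _ => 0) (Set.Icc 0 T) := by
    apply ODE_solution_unique_of_mem_Icc_left (v := fun t x => M t *ᵥ x)
      (s := fun _ => Set.univ) (fun t _ => hv t) hwcont
    · intro t ht
      exact (hw t (Set.Ioc_subset_Icc_self ht)).mono_of_mem_nhdsWithin
        (Icc_mem_nhdsLE_of_mem ht)
    · intro t ht; trivial
    · exact continuousOn_const
    · intro t ht
      simpa using (hasDerivWithinAt_const t (Set.Iic t) (0 : Fin n → ℝ))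
    · intro t ht; trivial
    · simpa using hwT
  intro t ht
  have := key ht
  have hw0 : P1 t *ᵥ z t + g t - (P0 t *ᵥ z t + G t) = 0 := this
  exact sub_eq_zero.mp hw0
end
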